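/- For the binary case with the paper's block parametrization: setting V(Y) = o(A)+o(B)+o(C)+o(D) (number of ones, assumed ≤ nm/2), V_R(Y) = nm' − o(A) + o(B) − o(C) + o(D), V_C(Y) = n'm − o(A) − o(B) + o(C) + o(D), with normalized variables x = n'/n ∈ [0,1], y = m'/m ∈ [0,1], a = o(A)/(nm), b = o(B)/(nm), c = o(C)/(nm), d = o(D)/(nm) subject to a ≤ xy, b ≤ x(1−y), c ≤ (1−x)y, d ≤ (1−x)(1−y), a+b+c+d ≤ 1/2, and x + y − 2a + 2d > 0, the inequality 2(a+b+c+d) ≤ (1+√2)(x+y−2a+2d) holds. -/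
import Mathlib


/-- The key inequality establishing the 1+√2 ratio on the relaxed feasible region:
2(a+b+c+d) ≤ (1+√2)(x+y-2a+2d). -/
theorem key_inequality (x y a b c d : ℝ)
    (hx0 : 0 ≤ x) (hx1 : x ≤ 1) (hy0 : 0 ≤ y) (hy1 : y ≤ 1)
    (ha0 : 0 ≤ a) (hb0 : 0 ≤ b) (hc0 : 0 ≤ c) (hd0 : 0 ≤ d)
    (ha : a ≤ x * y) (hb : b ≤ x * (1 - y)) (hc : c ≤ (1 - x) * y)
    (hd : d ≤ (1 - x) * (1 - y))
    (hsum : a + b + c + d ≤ 1 / 2)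
    (hden : 0 < x + y - 2 * a + 2 * d) :
    2 * (a + b + c + d) ≤ (1 + Real.sqrt 2) * (x + y - 2 * a + 2 * d) := by
  set r := Real.sqrt 2 with hrdef
  have hr0 : (0:ℝ) ≤ r := Real.sqrt_nonneg 2
  have hr2 : r ^ 2 = 2 := Real.sq_sqrt (by norm_num)
  have hr1 : 1 ≤ r := by nlinarith
  have hs0 : 0 ≤ x + y := by linarith
  have hbc : b + c ≤ x + y - 2 * (x * y) := by nlinarith [hb, hc]
  rcases le_or_gt (x + y) (2 - r) with hA | hB
  · -- small s: direct bound using b+c ≤ x+y-2xy, a ≤ xy, d ≥ 0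
    have key : 2 * (r * (x * y)) ≤ (r - 1) * (x + y) := by
      nlinarith [sq_nonneg (x - y),
        mul_nonneg hs0 (by linarith : (0:ℝ) ≤ 2 - r - (x + y)),
        mul_nonneg hr0 (mul_nonneg hs0 (by linarith : (0:ℝ) ≤ 2 - r - (x + y))),
        mul_nonneg hr0 (sq_nonneg (x - y))]
    have hra : r * a ≤ r * (x * y) := mul_le_mul_of_nonneg_left ha hr0
    have hrd : 0 ≤ r * d := mul_nonneg hr0 hd0
    nlinarith [key, hra, hrd]
  · -- large s: denominator ≥ r - 1, numerator ≤ 1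
    have hD : r - 1 ≤ x + y - 2 * a + 2 * d := by
      rcases le_or_gt (x + y) r with hB1 | hB2
      · have key2 : r - 1 ≤ x + y - 2 * (x * y) := by
          nlinarith [sq_nonneg (x - y),
            mul_nonneg (by linarith : (0:ℝ) ≤ r - (x + y))
              (by linarith : (0:ℝ) ≤ x + y - (2 - r))]
        linarith [key2, ha]
      · linarith
    have h1 : (1 + r) * (r - 1) = 1 := by linear_combination hr2
    have h2 : (1 + r) * (r - 1) ≤ (1 + r) * (x + y - 2 * a + 2 * d) :=
      mul_le_mul_of_nonneg_left hD (by linarith)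
    linarith
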